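/- (Intermediate claim from Example 2.2 of the paper.) Let Q ⊆ ℝ² be the closed quadrilateral (convex hull) with vertices (1,1), (1,2), (3/2, 5/2) and (2,2). Every future-directed timelike curve in ℝ² whose image is contained in Q has Lorentzian length at most √2. -/

import Mathlib

open Set
open scoped ENNReal

/-- A vector of the Minkowski plane (first coordinate space, second coordinate time)
is future-directed timelike. -/
def FDTimelike (v : ℝ × ℝ) : Prop := |v.1| < v.2

/-- A future-directed timelike curve in `M ⊆ ℝ²` from `p` to `q`: a piecewise `C¹`
map `γ : [0,1] → M` all of whose one-sided derivatives are future-directed timelike. -/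
def IsTimelikeCurveIn (M : Set (ℝ × ℝ)) (γ : ℝ → ℝ × ℝ) (p q : ℝ × ℝ) : Prop :=
  γ 0 = p ∧ γ 1 = q ∧ (∀ s ∈ Set.Icc (0 : ℝ) 1, γ s ∈ M) ∧
  ∃ (m : ℕ) (t : ℕ → ℝ), 0 < m ∧ t 0 = 0 ∧ t m = 1 ∧ (∀ j < m, t j < t (j + 1)) ∧
    ∀ j < m,
      ContDiffOn ℝ 1 γ (Set.Icc (t j) (t (j + 1))) ∧
      ∀ s ∈ Set.Icc (t j) (t (j + 1)),
        FDTimelike (derivWithin γ (Set.Icc (t j) (t (j + 1))) s)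

/-- The Lorentzian length of a curve in the Minkowski plane. -/
noncomputable def Llen (γ : ℝ → ℝ × ℝ) : ℝ :=
  ∫ s in (0 : ℝ)..1, Real.sqrt ((deriv γ s).2 ^ 2 - (deriv γ s).1 ^ 2)

/-- The Lorentzian distance of `M ⊆ ℝ²`. -/
noncomputable def LorDist (M : Set (ℝ × ℝ)) (p q : ℝ × ℝ) : ℝ≥0∞ :=
  ⨆ (γ : ℝ → ℝ × ℝ) (_ : IsTimelikeCurveIn M γ p q), ENNReal.ofReal (Llen γ)


/-- The closed quadrilateral with vertices `(1,1)`, `(1,2)`, `(3/2, 5/2)`, `(2,2)`. -/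
noncomputable def Qquad : Set (ℝ × ℝ) :=
  convexHull ℝ {((1 : ℝ), (1 : ℝ)), ((1 : ℝ), (2 : ℝ)),
    ((3 / 2 : ℝ), (5 / 2 : ℝ)), ((2 : ℝ), (2 : ℝ))}

/-- Pointwise reverse-Cauchy–Schwarz type bound against the timelike covector `(1/2,3/2)`. -/
lemma ptwise {v : ℝ × ℝ} (hv : |v.1| < v.2) :
    Real.sqrt (v.2 ^ 2 - v.1 ^ 2) ≤ (3 * v.2 - v.1) / (2 * Real.sqrt 2) := by
  have h2 : (0:ℝ) < Real.sqrt 2 := Real.sqrt_pos.mpr (by norm_num)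
  have hsq : (Real.sqrt 2) ^ 2 = 2 := Real.sq_sqrt (by norm_num)
  have habs := abs_lt.mp hv
  have hrhs : 0 ≤ (3 * v.2 - v.1) / (2 * Real.sqrt 2) := by
    apply div_nonneg _ (by positivity)
    nlinarith [habs.1, habs.2]
  rw [show (3 * v.2 - v.1) / (2 * Real.sqrt 2)
      = Real.sqrt (((3 * v.2 - v.1) / (2 * Real.sqrt 2)) ^ 2) from
      (Real.sqrt_sq hrhs).symm]
  apply Real.sqrt_le_sqrt
  rw [div_pow, show (2 * Real.sqrt 2) ^ 2 = 8 by nlinarith]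
  rw [le_div_iff₀ (by norm_num : (0:ℝ) < 8)]
  nlinarith [sq_nonneg (v.2 - 3 * v.1)]

/-- On the quadrilateral, the linear functional `3 t − x` lies in `[2, 6]`. -/
lemma quad_bounds {x : ℝ × ℝ} (hx : x ∈ Qquad) :
    2 ≤ 3 * x.2 - x.1 ∧ 3 * x.2 - x.1 ≤ 6 := by
  have hlin : IsLinearMap ℝ (fun w : ℝ × ℝ => 3 * w.2 - w.1) := by
    constructor
    · intro a b; simp only [Prod.fst_add, Prod.snd_add]; ring
    · intro c a; simp only [Prod.smul_fst, Prod.smul_snd, smul_eq_mul]; ring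
  constructor
  · refine convexHull_min (fun w hw => ?_) (convex_halfSpace_ge hlin 2) hx
    simp only [mem_insert_iff, mem_singleton_iff] at hw
    rcases hw with h | h | h | h <;> subst h <;> norm_num
  · refine convexHull_min (fun w hw => ?_) (convex_halfSpace_le hlin 6) hx
    simp only [mem_insert_iff, mem_singleton_iff] at hw
    rcases hw with h | h | h | h <;> subst h <;> norm_num

/-- Every future-directed timelike curve contained in the quadrilateral `Q` has
Lorentzian length at most `√2`. -/
theorem stmt_11 (p q : ℝ × ℝ) (γ : ℝ → ℝ × ℝ)
    (h : IsTimelikeCurveIn Qquad γ p q) : Llen γ ≤ Real.sqrt 2 := by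
  obtain ⟨h0, h1, hM, m, t, hm, ht0, htm, hlt, hpc⟩ := h
  have h2 : (0:ℝ) < Real.sqrt 2 := Real.sqrt_pos.mpr (by norm_num)
  have hsq : (Real.sqrt 2) ^ 2 = 2 := Real.sq_sqrt (by norm_num)
  set g : ℝ → ℝ := fun s => Real.sqrt ((deriv γ s).2 ^ 2 - (deriv γ s).1 ^ 2) with hg
  -- per-piece facts
  -- derivWithin-based integrand on piece j
  have key : ∀ j < m, IntervalIntegrable g MeasureTheory.volume (t j) (t (j+1)) ∧
      (∫ s in (t j)..(t (j+1)), g s) ≤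
        ((3 * (γ (t (j+1))).2 - (γ (t (j+1))).1) - (3 * (γ (t j)).2 - (γ (t j)).1))
          / (2 * Real.sqrt 2) := by
    intro j hj
    obtain ⟨hcd, htl⟩ := hpc j hj
    have hab : t j ≤ t (j+1) := (hlt j hj).le
    set I : Set ℝ := Set.Icc (t j) (t (j+1)) with hI
    have huniq : UniqueDiffOn ℝ I := uniqueDiffOn_Icc (hlt j hj)
    set G : ℝ → ℝ := fun s =>
      Real.sqrt ((derivWithin γ I s).2 ^ 2 - (derivWithin γ I s).1 ^ 2) with hG
    set H : ℝ → ℝ := fun s =>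
      (3 * (derivWithin γ I s).2 - (derivWithin γ I s).1) / (2 * Real.sqrt 2) with hH
    have hdc : ContinuousOn (derivWithin γ I) I :=
      hcd.continuousOn_derivWithin huniq le_rfl
    have hGc : ContinuousOn G I := by
      apply ContinuousOn.sqrt
      exact ((continuous_snd.comp_continuousOn hdc).pow 2).sub
        ((continuous_fst.comp_continuousOn hdc).pow 2)
    have hHc : ContinuousOn H I := by
      apply ContinuousOn.div_const
      exact (continuousOn_const.mul (continuous_snd.comp_continuousOn hdc)).sub
        (continuous_fst.comp_continuousOn hdc)
    have hGint : IntervalIntegrable G MeasureTheory.volume (t j) (t (j+1)) :=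
      ContinuousOn.intervalIntegrable (by rw [Set.uIcc_of_le hab]; exact hGc)
    have hHint : IntervalIntegrable H MeasureTheory.volume (t j) (t (j+1)) :=
      ContinuousOn.intervalIntegrable (by rw [Set.uIcc_of_le hab]; exact hHc)
    -- at interior points, deriv = derivWithin
    have hinterior : ∀ s ∈ Set.Ioo (t j) (t (j+1)),
        DifferentiableAt ℝ γ s ∧ deriv γ s = derivWithin γ I s := by
      intro s hs
      have hnhds : I ∈ nhds s := Icc_mem_nhds hs.1 hs.2
      have hdiff : DifferentiableAt ℝ γ s :=
        ((hcd.differentiableOn one_ne_zero) s (Set.Ioo_subset_Icc_self hs)).differentiableAt hnhds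
      exact ⟨hdiff, (derivWithin_of_mem_nhds hnhds).symm⟩
    have hae : ∀ᵐ s : ℝ ∂MeasureTheory.volume, s ≠ t (j+1) := by
      rw [MeasureTheory.ae_iff]
      have hset : {a : ℝ | ¬ a ≠ t (j+1)} = {t (j+1)} := by ext x; simp
      rw [hset]
      exact Real.volume_singleton
    -- g = G a.e. on the piece
    have hcong : (∫ s in (t j)..(t (j+1)), g s) = ∫ s in (t j)..(t (j+1)), G s := by
      apply intervalIntegral.integral_congr_ae
      filter_upwards [hae] with s hs hmem
      rw [Set.uIoc_of_le hab] at hmem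
      have hso : s ∈ Set.Ioo (t j) (t (j+1)) := ⟨hmem.1, lt_of_le_of_ne hmem.2 hs⟩
      simp only [hg, hG, (hinterior s hso).2]
    have hgint : IntervalIntegrable g MeasureTheory.volume (t j) (t (j+1)) := by
      apply hGint.congr_ae
      refine (MeasureTheory.ae_restrict_iff' measurableSet_uIoc).mpr ?_
      filter_upwards [hae] with s hs hmem
      rw [Set.uIoc_of_le hab] at hmem
      have hso : s ∈ Set.Ioo (t j) (t (j+1)) := ⟨hmem.1, lt_of_le_of_ne hmem.2 hs⟩
      simp only [hg, hG, (hinterior s hso).2]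
    refine ⟨hgint, ?_⟩
    rw [hcong]
    have hGH : (∫ s in (t j)..(t (j+1)), G s) ≤ ∫ s in (t j)..(t (j+1)), H s := by
      apply intervalIntegral.integral_mono_on hab hGint hHint
      intro s hs
      exact ptwise (htl s hs)
    refine hGH.trans_eq ?_
    -- FTC: ∫ H = F(t(j+1)) - F(t j) with F s = (3 (γ s).2 - (γ s).1)/(2√2)
    have hFcont : ContinuousOn (fun s => (3 * (γ s).2 - (γ s).1) / (2 * Real.sqrt 2)) I := by
      have hγc : ContinuousOn γ I := hcd.continuousOn
      apply ContinuousOn.div_const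
      exact (continuousOn_const.mul (continuous_snd.comp_continuousOn hγc)).sub
        (continuous_fst.comp_continuousOn hγc)
    have := intervalIntegral.integral_eq_sub_of_hasDeriv_right_of_le hab
      (f := fun s => (3 * (γ s).2 - (γ s).1) / (2 * Real.sqrt 2)) (f' := H)
      hFcont ?_ hHint
    · rw [this]; ring
    · intro s hs
      obtain ⟨hdiff, hdeq⟩ := hinterior s hs
      have hd : HasDerivAt γ (derivWithin γ I s) s := by
        rw [← hdeq]; exact hdiff.hasDerivAt
      have hd2 : HasDerivAt (fun u => (γ u).2) (derivWithin γ I s).2 s := hd.snd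
      have hd1 : HasDerivAt (fun u => (γ u).1) (derivWithin γ I s).1 s := hd.fst
      have : HasDerivAt (fun u => (3 * (γ u).2 - (γ u).1) / (2 * Real.sqrt 2))
          ((3 * (derivWithin γ I s).2 - (derivWithin γ I s).1) / (2 * Real.sqrt 2)) s :=
        ((hd2.const_mul 3).sub hd1).div_const _
      exact this.hasDerivWithinAt
  -- assemble
  have hsum : Llen γ = ∑ j ∈ Finset.range m, ∫ s in (t j)..(t (j+1)), g s := by
    rw [Llen, ← hg, ← ht0, ← htm]
    exact (intervalIntegral.sum_integral_adjacent_intervals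
      (fun k hk => (key k hk).1)).symm
  have hbound : Llen γ ≤
      ((3 * (γ 1).2 - (γ 1).1) - (3 * (γ 0).2 - (γ 0).1)) / (2 * Real.sqrt 2) := by
    rw [hsum]
    calc ∑ j ∈ Finset.range m, ∫ s in (t j)..(t (j+1)), g s
        ≤ ∑ j ∈ Finset.range m,
            (((3 * (γ (t (j+1))).2 - (γ (t (j+1))).1) - (3 * (γ (t j)).2 - (γ (t j)).1))
              / (2 * Real.sqrt 2)) :=
          Finset.sum_le_sum (fun j hj => (key j (Finset.mem_range.mp hj)).2)
      _ = ((3 * (γ (t m)).2 - (γ (t m)).1) - (3 * (γ (t 0)).2 - (γ (t 0)).1))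
              / (2 * Real.sqrt 2) := by
          rw [← Finset.sum_div, Finset.sum_range_sub
            (fun j => 3 * (γ (t j)).2 - (γ (t j)).1)]
      _ = _ := by rw [ht0, htm]
  have hq0 : γ 0 ∈ Qquad := hM 0 (by norm_num)
  have hq1 : γ 1 ∈ Qquad := hM 1 (by norm_num)
  have hb0 := (quad_bounds hq0).1
  have hb1 := (quad_bounds hq1).2
  refine hbound.trans ?_
  rw [div_le_iff₀ (by positivity)]
  nlinarith [hb0, hb1, hsq, h2]
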